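/- Let $k$ be a field of characteristic $p$, let $C_p$ be the cyclic group of order $p$ with generator $\zeta$, and let $\tau = \sum_{g \in C_p} g \in k[C_p]$ be the trace element. Let $f : k[C_p] \to k$ be a $k$-linear map. Then the $k$-linear map $k[C_p] \to \prod_{g \in C_p} k$ whose $g$-component sends $v$ to $f(g \cdot v)$ is an isomorphism if and only if $f(\tau) \neq 0$. -/

import Mathlib

theorem stmt0 (p : ℕ) [Fact p.Prime] (k : Type*) [Field k] [CharP k p]
    (f : MonoidAlgebra k (Multiplicative (ZMod p)) →ₗ[k] k) :
    Function.Bijective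
        (fun v : MonoidAlgebra k (Multiplicative (ZMod p)) =>
          fun g : Multiplicative (ZMod p) => f (MonoidAlgebra.single g 1 * v)) ↔
      f (∑ g : Multiplicative (ZMod p), MonoidAlgebra.single g 1) ≠ 0 := by
  classical
  set A := MonoidAlgebra k (Multiplicative (ZMod p)) with hAdef
  set τ : A := ∑ g : Multiplicative (ZMod p), MonoidAlgebra.single g 1 with hτdef
  -- characteristic of A
  haveI : CharP A p := by
    refine charP_of_injective_algebraMap (R := k) (A := A) ?_ p
    intro a b hab
    have := congrArg (fun x : A => x.coeff (1 : Multiplicative (ZMod p))) hab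
    simp only [Algebra.algebraMap_eq_smul_one] at this
    rwa [MonoidAlgebra.one_def, MonoidAlgebra.smul_single, MonoidAlgebra.smul_single,
      MonoidAlgebra.coeff_single, MonoidAlgebra.coeff_single, Finsupp.single_eq_same, Finsupp.single_eq_same, smul_eq_mul, smul_eq_mul,
      mul_one, mul_one] at this
  -- translates fix τ
  have hτg : ∀ g : Multiplicative (ZMod p), MonoidAlgebra.single g (1 : k) * τ = τ := by
    intro g
    rw [hτdef, Finset.mul_sum]
    refine Fintype.sum_equiv (Equiv.mulLeft g) _ _ fun h => ?_
    rw [MonoidAlgebra.single_mul_single, one_mul]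
    rfl
  -- coefficients of τ
  have hτapp : ∀ x : Multiplicative (ZMod p), τ.coeff x = 1 := by
    intro x
    rw [hτdef]
    rw [show ((∑ g : Multiplicative (ZMod p), MonoidAlgebra.single g (1 : k)).coeff x) =
        ∑ g : Multiplicative (ZMod p), (MonoidAlgebra.single g (1 : k)).coeff x from by rw [MonoidAlgebra.coeff_sum, Finset.sum_apply']]
    simp [MonoidAlgebra.coeff_single, Finsupp.single_apply]
  have hτ0 : τ ≠ 0 := by
    intro h
    have := hτapp 1
    rw [h] at this
    simp at this
  -- the generator
  set ζg : Multiplicative (ZMod p) := Multiplicative.ofAdd (1 : ZMod p) with hζg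
  set ζ : A := MonoidAlgebra.single ζg 1 with hζ
  have hζp : (ζ - 1) ^ p = 0 := by
    rw [sub_pow_char, one_pow, hζ, MonoidAlgebra.single_pow,
      show ζg ^ p = 1 from by
        rw [hζg, ← ofAdd_nsmul, nsmul_eq_mul, mul_one, ZMod.natCast_self, ofAdd_zero],
      one_pow, ← MonoidAlgebra.one_def, sub_self]
  -- elements fixed by ζ are constant
  have hconst : ∀ w : A, ζ * w = w → ∀ x : Multiplicative (ZMod p), w.coeff x = w.coeff 1 := by
    intro w hw x
    have hstep : ∀ z : Multiplicative (ZMod p), w.coeff (ζg * z) = w.coeff z := by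
      intro z
      have h1 : (ζ * w).coeff (ζg * z) = w.coeff (ζg * z) := by rw [hw]
      rw [hζ, MonoidAlgebra.coeff_single_mul_apply, one_mul, inv_mul_cancel_left] at h1
      exact h1.symm
    have hpow : ∀ n : ℕ, w.coeff (ζg ^ n) = w.coeff 1 := by
      intro n
      induction n with
      | zero => simp
      | succ n ih => rw [pow_succ, mul_comm (ζg ^ n) ζg, hstep, ih]
    have hx : ζg ^ (x.toAdd).val = x := by
      rw [hζg, ← ofAdd_nsmul, nsmul_eq_mul, mul_one, ZMod.natCast_val, ZMod.cast_id]
      rfl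
    rw [← hx, hpow]
  constructor
  · -- bijective → f τ ≠ 0
    intro hbij hfτ
    apply hτ0
    have : (fun g : Multiplicative (ZMod p) => f (MonoidAlgebra.single g 1 * τ)) =
        (fun g : Multiplicative (ZMod p) => f (MonoidAlgebra.single g 1 * (0 : A))) := by
      funext g
      rw [hτg g, hfτ]
      simp
    exact hbij.injective this
  · -- f τ ≠ 0 → bijective
    intro hfτ
    -- package as a linear map
    set Φ : A →ₗ[k] (Multiplicative (ZMod p) → k) :=
      LinearMap.pi (fun g : Multiplicative (ZMod p) => f ∘ₗ LinearMap.mulLeft k (MonoidAlgebra.single g 1)) with hΦ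
    have hΦcoe : (fun v : A => fun g : Multiplicative (ZMod p) => f (MonoidAlgebra.single g 1 * v)) = ⇑Φ := rfl
    rw [hΦcoe]
    -- injectivity
    have hinj : Function.Injective Φ := by
      rw [← LinearMap.ker_eq_bot, LinearMap.ker_eq_bot']
      intro v hv
      by_contra hv0
      have h : ∀ g : Multiplicative (ZMod p), f (MonoidAlgebra.single g 1 * v) = 0 := fun g => congrFun hv g
      -- f (a * v) = 0 for all a
      have hall : ∀ a : A, f (a * v) = 0 := by
        intro a
        conv_lhs => rw [← MonoidAlgebra.sum_coeff_single a]
        rw [Finsupp.sum, Finset.sum_mul, map_sum]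
        refine Finset.sum_eq_zero fun g _ => ?_
        have : MonoidAlgebra.single g (a.coeff g) * v = a.coeff g • (MonoidAlgebra.single g 1 * v) := by
          rw [← smul_mul_assoc, MonoidAlgebra.smul_single', mul_one]
        rw [this, map_smul, h g, smul_zero]
      have hex : ∃ n, (ζ - 1) ^ n * v = 0 := ⟨p, by rw [hζp, zero_mul]⟩
      set m := Nat.find hex with hm
      have hms : (ζ - 1) ^ m * v = 0 := Nat.find_spec hex
      have hm0 : m ≠ 0 := by
        intro h0
        rw [h0, pow_zero, one_mul] at hms
        exact hv0 hms
      set w : A := (ζ - 1) ^ (m - 1) * v with hwdef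
      have hw0 : w ≠ 0 := Nat.find_min hex (Nat.sub_lt (Nat.pos_of_ne_zero hm0) one_pos)
      have hζw : ζ * w = w := by
        have : (ζ - 1) * w = 0 := by
          rw [hwdef, ← mul_assoc, ← pow_succ', Nat.sub_add_cancel (Nat.one_le_iff_ne_zero.mpr hm0)]
          exact hms
        have h2 : ζ * w - w = 0 := by rw [← this]; ring
        exact sub_eq_zero.mp h2
      have hwc : ∀ x : Multiplicative (ZMod p), w.coeff x = w.coeff 1 := hconst w hζw
      have hwτ : w = (w.coeff 1) • τ := by
        ext x
        rw [MonoidAlgebra.coeff_smul_apply, hτapp x, smul_eq_mul, mul_one, hwc x]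
      have hw1 : w.coeff 1 ≠ 0 := by
        intro h1
        apply hw0
        rw [hwτ, h1, zero_smul]
      have : f w = 0 := hall _
      rw [hwτ, map_smul, smul_eq_mul] at this
      exact hfτ ((mul_eq_zero.mp this).resolve_left hw1)
    -- finite dimensionality
    haveI : Module.Finite k A := Module.Finite.of_basis
      (MonoidAlgebra.basis (Multiplicative (ZMod p)) k)
    have hrank : Module.finrank k A = Module.finrank k (Multiplicative (ZMod p) → k) := by
      rw [Module.finrank_eq_card_basis (MonoidAlgebra.basis (Multiplicative (ZMod p)) k),
        Module.finrank_pi]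
    exact ⟨hinj, (LinearMap.injective_iff_surjective_of_finrank_eq_finrank hrank).mp hinj⟩
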